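/- In the Pyro game with one firefighter on the path P_n with vertices v₁,…,v_n (n ≥ 3), where the pyro initially burns v_i, the maximum number of vertices that can be saved under optimal play by both players is n − 2 if 2 ≤ i ≤ n − 1 (v_i is a non-leaf), and n − 1 if i ∈ {1, n} (v_i is a leaf). -/
import Mathlib


/-- A game state: the pair (burned vertices, protected vertices). -/
abbrev GState (V : Type*) := Set V × Set V

/-- The history of game states up to time `t`, most recent state first. -/
def histStates {V : Type*} (B P : ℕ → Set V) : ℕ → List (GState V)
  | 0 => [(B 0, P 0)]
  | t + 1 => (B (t + 1), P (t + 1)) :: histStates B P t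

/-- A legal firefighter strategy for `k` firefighters on a (possibly finite) graph:
at each history it protects at most `k` vertices, all of them unburned and unprotected
in the current state.  (Protecting fewer than `k` vertices never helps the firefighter,
so this yields the same optimal value as protecting exactly `k` whenever possible.) -/
def LegalStrategyLe {V : Type*} (k : ℕ) (σ : List (GState V) → Finset V) : Prop :=
  ∀ (h : List (GState V)) (Bs Ps : Set V), h.head? = some (Bs, Ps) →
    (σ h).card ≤ k ∧ (↑(σ h) : Set V) ∩ (Bs ∪ Ps) = ∅

/-- A play of the Pyro game with initial burned vertex `v0`, where the firefighter
follows strategy `σ`: `B t` and `P t` are the burned and protected sets at the end of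
step `t`, and `x t` is the burned vertex from which the pyro spreads during step `t+1`.
At each step `t+1` the firefighter first protects the vertices `σ (history)`, and then
the pyro burns from the burned vertex `x t` to all its unprotected, unburned
neighbours. -/
def IsPyroPlay {V : Type*} (adj : V → V → Prop) (v0 : V)
    (σ : List (GState V) → Finset V)
    (B P : ℕ → Set V) (x : ℕ → V) : Prop :=
  B 0 = {v0} ∧ P 0 = ∅ ∧
  ∀ t : ℕ,
    P (t + 1) = P t ∪ ↑(σ (histStates B P t)) ∧
    x t ∈ B t ∧
    B (t + 1) = B t ∪ {v | adj (x t) v ∧ v ∉ P (t + 1)}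

lemma histStates_length {V : Type*} (B P : ℕ → Set V) (t : ℕ) :
    (histStates B P t).length = t + 1 := by
  induction t with
  | zero => rfl
  | succ t ih => simp [histStates, ih]

lemma histStates_head {V : Type*} (B P : ℕ → Set V) (t : ℕ) :
    (histStates B P t).head? = some (B t, P t) := by
  cases t <;> rfl

open Classical in
noncomputable def mySigma {V : Type*} (tgt : ℕ → Option V) (h : List (GState V)) : Finset V :=
  match tgt h.length, h.head? with
  | some w, some s => if w ∈ s.1 ∨ w ∈ s.2 then ∅ else {w}
  | _, _ => ∅

lemma mySigma_legal {V : Type*} (tgt : ℕ → Option V) : LegalStrategyLe 1 (mySigma tgt) := by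
  intro h Bs Ps hh
  unfold mySigma
  rw [hh]
  rcases ht : tgt h.length with _ | w
  · simp
  · by_cases hw : w ∈ Bs ∨ w ∈ Ps
    · simp [hw]
    · push_neg at hw
      simp only [hw.1, hw.2, or_self, if_false, Finset.card_singleton, le_refl, true_and,
        Finset.coe_singleton]
      rw [Set.singleton_inter_eq_empty]
      simp [hw.1, hw.2]

lemma mySigma_some {V : Type*} {tgt : ℕ → Option V} {h : List (GState V)} {w : V}
    {Bs Ps : Set V} (ht : tgt h.length = some w) (hh : h.head? = some (Bs, Ps))
    (hB : w ∉ Bs) (hP : w ∉ Ps) : mySigma tgt h = {w} := by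
  unfold mySigma
  rw [ht, hh]
  simp [hB, hP]

def mkHist {V : Type*} (adj : V → V → Prop) (σ : List (GState V) → Finset V)
    (v0 : V) (x : ℕ → V) : ℕ → List (GState V)
  | 0 => [({v0}, ∅)]
  | t + 1 =>
    let h := mkHist adj σ v0 x t
    let P' : Set V := h.headI.2 ∪ ↑(σ h)
    (h.headI.1 ∪ {v | adj (x t) v ∧ v ∉ P'}, P') :: h

lemma mkHist_histStates {V : Type*} (adj : V → V → Prop) (σ : List (GState V) → Finset V)
    (v0 : V) (x : ℕ → V) (t : ℕ) :
    histStates (fun s => (mkHist adj σ v0 x s).headI.1)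
      (fun s => (mkHist adj σ v0 x s).headI.2) t = mkHist adj σ v0 x t := by
  induction t with
  | zero => rfl
  | succ t ih => rw [histStates, ih, mkHist]; rfl

lemma mkHist_isPlay {V : Type*} (adj : V → V → Prop) (σ : List (GState V) → Finset V)
    (v0 : V) :
    IsPyroPlay adj v0 σ (fun s => (mkHist adj σ v0 (fun _ => v0) s).headI.1)
      (fun s => (mkHist adj σ v0 (fun _ => v0) s).headI.2) (fun _ => v0) := by
  refine ⟨rfl, rfl, fun t => ⟨?_, ?_, rfl⟩⟩
  · rw [mkHist_histStates]; rfl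
  · induction t with
    | zero => exact rfl
    | succ t ih => exact Set.mem_union_left _ ih

lemma play_P_succ {V : Type*} {adj : V → V → Prop} {v0 : V}
    {σ : List (GState V) → Finset V} {B P : ℕ → Set V} {x : ℕ → V}
    (hp : IsPyroPlay adj v0 σ B P x) (t : ℕ) : P t ⊆ P (t + 1) := by
  rw [(hp.2.2 t).1]; exact Set.subset_union_left

lemma play_P_le {V : Type*} {adj : V → V → Prop} {v0 : V}
    {σ : List (GState V) → Finset V} {B P : ℕ → Set V} {x : ℕ → V}
    (hp : IsPyroPlay adj v0 σ B P x) {s t : ℕ} (h : s ≤ t) : P s ⊆ P t := by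
  induction t with
  | zero => simp_all
  | succ t ih =>
    rcases Nat.lt_or_ge s (t+1) with h' | h'
    · exact (ih (by omega)).trans (play_P_succ hp t)
    · have : s = t + 1 := by omega
      subst this; rfl


lemma burn_set_eq {n : ℕ} {i a b : Fin n} (hi1 : 1 ≤ i.val)
    (hav : a.val = i.val - 1) (hbv : b.val = i.val + 1) :
    ({i} : Set (Fin n)) ∪
      {v | (SimpleGraph.pathGraph n).Adj i v ∧ v ∉ ({b} : Set (Fin n))} = {i, a} := by
  ext v
  simp only [Set.mem_union, Set.mem_singleton_iff, Set.mem_setOf_eq, Set.mem_insert_iff,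
    SimpleGraph.pathGraph_adj, Fin.ext_iff, hav, hbv]
  omega

lemma step_arith {n : ℕ} {i v xt : Fin n} (hi1 : 1 ≤ i.val)
    (hxv : xt.val = i.val ∨ xt.val = i.val - 1)
    (hadj : xt.val + 1 = v.val ∨ v.val + 1 = xt.val)
    (hvb : v.val ≠ i.val + 1)
    (hvd : 2 ≤ i.val → v.val ≠ i.val - 2) :
    v.val = i.val ∨ v.val = i.val - 1 := by
  by_cases h2 : 2 ≤ i.val
  · have := hvd h2; omega
  · omega

lemma d_notin {n : ℕ} {i a b d : Fin n} (hi1 : 2 ≤ i.val)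
    (hav : a.val = i.val - 1) (hbv : b.val = i.val + 1) (hdv : d.val = i.val - 2) :
    d ∉ ({i, a} : Set (Fin n)) ∧ d ∉ ({b} : Set (Fin n)) := by
  simp only [Set.mem_insert_iff, Set.mem_singleton_iff, Fin.ext_iff, hav, hbv, hdv]
  omega

set_option linter.all false in
set_option maxHeartbeats 1000000 in
/-- In the Pyro game with one firefighter on the path `P_n` (`n ≥ 3`) with vertices
`v_0, …, v_{n-1}` and the pyro initially burning `v_i`, the maximum number of saved
vertices under optimal play (the largest number of saved vertices the firefighter can
guarantee against every pyro strategy) is `n - 1` if `v_i` is a leaf (`i = 0` or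
`i = n - 1`), and `n - 2` otherwise. -/
theorem pyro_path_max_saved (n : ℕ) (hn : 3 ≤ n) (i : Fin n) :
    IsGreatest
      {m : ℕ | ∃ σ : List (GState (Fin n)) → Finset (Fin n),
        LegalStrategyLe 1 σ ∧
        ∀ (B P : ℕ → Set (Fin n)) (x : ℕ → Fin n),
          IsPyroPlay (SimpleGraph.pathGraph n).Adj i σ B P x →
            m ≤ ((⋃ t, B t)ᶜ).ncard}
      (if i.val = 0 ∨ i.val = n - 1 then n - 1 else n - 2) := by
  have hilt := i.isLt
  have hcompl : ∀ s : Set (Fin n), s.ncard + sᶜ.ncard = n := fun s => by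
    simpa [Nat.card_eq_fintype_card] using Set.ncard_add_ncard_compl s
  constructor
  · -- membership: the firefighter has a strategy achieving the bound
    by_cases hleaf : i.val = 0 ∨ i.val = n - 1
    · rw [Set.mem_setOf_eq, if_pos hleaf]
      have hwlt : (if i.val = 0 then 1 else n - 2) < n := by split <;> omega
      set w : Fin n := ⟨if i.val = 0 then 1 else n - 2, hwlt⟩ with hw
      have hwval : w.val = if i.val = 0 then 1 else n - 2 := rfl
      have hwne : w ≠ i := by
        apply Fin.ne_of_val_ne
        rw [hwval]
        rcases hleaf with h | h
        · rw [if_pos h]; omega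
        · rw [if_neg (by omega)]; omega
      have hadjw : ∀ v : Fin n, (SimpleGraph.pathGraph n).Adj i v → v = w := by
        intro v hv
        rw [SimpleGraph.pathGraph_adj] at hv
        have hvlt := v.isLt
        apply Fin.ext
        rw [hwval]
        rcases hleaf with h | h
        · rw [if_pos h]; omega
        · rw [if_neg (by omega)]; omega
      refine ⟨mySigma (fun t => if t = 1 then some w else none), mySigma_legal _, ?_⟩
      intro B P x hp
      obtain ⟨hB0, hP0, hstep⟩ := hp
      have hp' : IsPyroPlay (SimpleGraph.pathGraph n).Adj i
          (mySigma (fun t => if t = 1 then some w else none)) B P x := ⟨hB0, hP0, hstep⟩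
      have hP1 : w ∈ P 1 := by
        rw [(hstep 0).1]
        right
        have : mySigma (fun t => if t = 1 then some w else none) (histStates B P 0) = {w} := by
          refine mySigma_some ?_ ((histStates_head B P 0).trans (by rw [hB0, hP0])) ?_ ?_
          · simp [histStates_length]
          · simp [hwne]
          · simp
        rw [this]; simp
      have key : ∀ t, B t ⊆ {i} ∧ (1 ≤ t → w ∈ P t) := by
        intro t
        induction t with
        | zero => exact ⟨hB0.subset, by omega⟩
        | succ t ih =>
          have hPw : w ∈ P (t + 1) := by
            rcases Nat.eq_zero_or_pos t with ht0 | ht1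
            · subst ht0; exact hP1
            · exact play_P_succ hp' t (ih.2 ht1)
          refine ⟨?_, fun _ => hPw⟩
          rw [(hstep t).2.2]
          intro v hv
          rcases hv with hv | hv
          · exact ih.1 hv
          · exfalso
            have hx : x t = i := ih.1 (hstep t).2.1
            have hvw : v = w := hadjw v (hx ▸ hv.1)
            exact hv.2 (hvw ▸ hPw)
      have hsub : (⋃ t, B t) ⊆ {i} := Set.iUnion_subset fun t => (key t).1
      have h2 : (({i} : Set (Fin n))ᶜ).ncard = n - 1 := by
        have := hcompl {i}
        rw [Set.ncard_singleton] at this; omega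
      calc n - 1 = (({i} : Set (Fin n))ᶜ).ncard := h2.symm
        _ ≤ ((⋃ t, B t)ᶜ).ncard :=
          Set.ncard_le_ncard (Set.compl_subset_compl.2 hsub) (Set.toFinite _)
    · rw [Set.mem_setOf_eq, if_neg hleaf]
      push_neg at hleaf
      have hi1 : 1 ≤ i.val := by omega
      have hi2 : i.val + 1 < n := by omega
      obtain ⟨a, hav⟩ : ∃ a : Fin n, a.val = i.val - 1 := ⟨⟨i.val - 1, by omega⟩, rfl⟩
      obtain ⟨b, hbv⟩ : ∃ b : Fin n, b.val = i.val + 1 := ⟨⟨i.val + 1, hi2⟩, rfl⟩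
      obtain ⟨d, hdv⟩ : ∃ d : Fin n, d.val = i.val - 2 := ⟨⟨i.val - 2, by omega⟩, rfl⟩
      set tgt : ℕ → Option (Fin n) :=
        fun t => if t = 1 then some b else if t = 2 then some d else none with htgt
      refine ⟨mySigma tgt, mySigma_legal _, ?_⟩
      intro B P x hp
      obtain ⟨hB0, hP0, hstep⟩ := hp
      have hp' : IsPyroPlay (SimpleGraph.pathGraph n).Adj i (mySigma tgt) B P x :=
        ⟨hB0, hP0, hstep⟩
      have hbi : b ≠ i := Fin.ne_of_val_ne (by rw [hbv]; omega)
      have hP1 : P 1 = {b} := by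
        rw [(hstep 0).1, hP0]
        have : mySigma tgt (histStates B P 0) = {b} := by
          refine mySigma_some ?_ ((histStates_head B P 0).trans (by rw [hB0, hP0])) ?_ ?_
          · simp [histStates_length, htgt]
          · simp [hbi]
          · simp
        rw [this]; simp
      have hx0 : x 0 = i := by
        have := (hstep 0).2.1; rw [hB0] at this; exact this
      have hB1 : B 1 = {i, a} := by
        rw [(hstep 0).2.2, hB0, hP1, hx0]
        exact burn_set_eq hi1 hav hbv
      have hP2 : 2 ≤ i.val → d ∈ P 2 := by
        intro h2
        rw [(hstep 1).1]
        right
        have : mySigma tgt (histStates B P 1) = {d} := by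
          refine mySigma_some ?_ ((histStates_head B P 1).trans (by rw [hB1, hP1])) ?_ ?_
          · simp [histStates_length, htgt]
          · exact (d_notin h2 hav hbv hdv).1
          · exact (d_notin h2 hav hbv hdv).2
        rw [this]; simp
      have key : ∀ t, 1 ≤ t →
          B t ⊆ {i, a} ∧ b ∈ P t ∧ (2 ≤ t → 2 ≤ i.val → d ∈ P t) := by
        intro t
        induction t with
        | zero => omega
        | succ t ih =>
          intro _
          by_cases ht0 : t = 0
          · subst ht0
            exact ⟨hB1.subset, by rw [hP1]; rfl, fun h _ => by omega⟩
          · have ht1 : 1 ≤ t := by omega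
            obtain ⟨hBt, hPb, hPd⟩ := ih ht1
            have hPsub : P t ⊆ P (t + 1) := play_P_succ hp' t
            have hPb' : b ∈ P (t + 1) := hPsub hPb
            have hPd' : 2 ≤ i.val → d ∈ P (t + 1) := by
              intro h2
              by_cases ht2 : t = 1
              · subst ht2; exact hP2 h2
              · exact hPsub (hPd (by omega) h2)
            refine ⟨?_, hPb', fun _ h2 => hPd' h2⟩
            rw [(hstep t).2.2]
            intro v hv
            rcases hv with hv | hv
            · exact hBt hv
            · obtain ⟨hadj, hvP⟩ := hv
              have hx : x t ∈ ({i, a} : Set (Fin n)) := hBt (hstep t).2.1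
              have hxv : (x t).val = i.val ∨ (x t).val = i.val - 1 := by
                rcases hx with hx | hx
                · left; rw [hx]
                · right; rw [Set.mem_singleton_iff] at hx; rw [hx, hav]
              rw [SimpleGraph.pathGraph_adj] at hadj
              have hvb : v.val ≠ i.val + 1 := by
                intro h
                exact hvP (by rw [show v = b from Fin.ext (h.trans hbv.symm)]; exact hPb')
              have hvd : 2 ≤ i.val → v.val ≠ i.val - 2 := by
                intro h2 h
                exact hvP (by rw [show v = d from Fin.ext (h.trans hdv.symm)]; exact hPd' h2)
              rcases step_arith hi1 hxv hadj hvb hvd with h | h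
              · exact Or.inl (Fin.ext h)
              · exact Or.inr (Fin.ext (h.trans hav.symm))
      have hsub : (⋃ t, B t) ⊆ {i, a} := by
        refine Set.iUnion_subset fun t => ?_
        rcases Nat.eq_zero_or_pos t with h | h
        · subst h; rw [hB0]; exact fun v hv => Or.inl hv
        · exact (key t h).1
      have hia : a ≠ i := Fin.ne_of_val_ne (by rw [hav]; omega)
      have h2 : (({i, a} : Set (Fin n))ᶜ).ncard = n - 2 := by
        have h3 := hcompl {i, a}
        rw [Set.ncard_pair hia.symm] at h3; omega
      calc n - 2 = (({i, a} : Set (Fin n))ᶜ).ncard := h2.symm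
        _ ≤ ((⋃ t, B t)ᶜ).ncard :=
          Set.ncard_le_ncard (Set.compl_subset_compl.2 hsub) (Set.toFinite _)
  · -- upper bound: the pyro spreading from i every step burns enough
    rintro m ⟨σ, hleg, hm⟩
    obtain ⟨B, P, x, hp, hx⟩ :
        ∃ B P x, IsPyroPlay (SimpleGraph.pathGraph n).Adj i σ B P x ∧ ∀ t, x t = i :=
      ⟨_, _, _, mkHist_isPlay _ σ i, fun _ => rfl⟩
    have hle := hm B P x hp
    have hiU : i ∈ ⋃ t, B t := Set.mem_iUnion.2 ⟨0, by rw [hp.1]; rfl⟩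
    by_cases hleaf : i.val = 0 ∨ i.val = n - 1
    · rw [if_pos hleaf]
      have hsub : (⋃ t, B t)ᶜ ⊆ ({i} : Set (Fin n))ᶜ :=
        Set.compl_subset_compl.2 (Set.singleton_subset_iff.2 hiU)
      have h2 : (({i} : Set (Fin n))ᶜ).ncard = n - 1 := by
        have := hcompl {i}
        rw [Set.ncard_singleton] at this; omega
      have := Set.ncard_le_ncard hsub (Set.toFinite _)
      omega
    · rw [if_neg hleaf]
      push_neg at hleaf
      have hi1 : 1 ≤ i.val := by omega
      have hi2 : i.val + 1 < n := by omega
      set a : Fin n := ⟨i.val - 1, by omega⟩ with ha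
      set b : Fin n := ⟨i.val + 1, hi2⟩ with hb
      have hav : a.val = i.val - 1 := rfl
      have hbv : b.val = i.val + 1 := rfl
      have hab : a ≠ b := Fin.ne_of_val_ne (by omega)
      have hs0 := hleg (histStates B P 0) (B 0) (P 0) (histStates_head B P 0)
      have hP1 : P 1 = ↑(σ (histStates B P 0)) := by
        rw [(hp.2.2 0).1, hp.2.1]; simp
      -- at least one of a, b is unprotected at step 1
      have hone : a ∉ P 1 ∨ b ∉ P 1 := by
        by_contra h
        push_neg at h
        have hmem : ({a, b} : Finset (Fin n)) ⊆ σ (histStates B P 0) := by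
          intro y hy
          rw [Finset.mem_insert, Finset.mem_singleton] at hy
          rcases hy with rfl | rfl
          · exact Finset.mem_coe.1 (hP1 ▸ h.1)
          · exact Finset.mem_coe.1 (hP1 ▸ h.2)
        have := Finset.card_le_card hmem
        rw [Finset.card_pair hab] at this
        omega
      -- hence at least one of a, b is burned at step 1
      obtain ⟨c, hcval, hcP⟩ : ∃ c : Fin n, (c = a ∨ c = b) ∧ c ∉ P 1 := by
        rcases hone with h | h
        · exact ⟨a, Or.inl rfl, h⟩
        · exact ⟨b, Or.inr rfl, h⟩
      have hadjc : (SimpleGraph.pathGraph n).Adj (x 0) c := by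
        rw [hx 0, SimpleGraph.pathGraph_adj]
        rcases hcval with rfl | rfl
        · right; rw [hav]; omega
        · left; rw [hbv]
      have hcB1 : c ∈ B 1 := by
        rw [(hp.2.2 0).2.2]
        exact Set.mem_union_right _ ⟨hadjc, hcP⟩
      have hcU : c ∈ ⋃ t, B t := Set.mem_iUnion.2 ⟨1, hcB1⟩
      have hci : c ≠ i := by
        rcases hcval with rfl | rfl
        · exact Fin.ne_of_val_ne (by omega)
        · exact Fin.ne_of_val_ne (by omega)
      have hsub : (⋃ t, B t)ᶜ ⊆ ({i, c} : Set (Fin n))ᶜ := by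
        apply Set.compl_subset_compl.2
        intro v hv
        rcases hv with rfl | hv
        · exact hiU
        · rw [Set.mem_singleton_iff] at hv; subst hv; exact hcU
      have h2 : (({i, c} : Set (Fin n))ᶜ).ncard = n - 2 := by
        have h3 := hcompl {i, c}
        rw [Set.ncard_pair hci.symm] at h3; omega
      have := Set.ncard_le_ncard hsub (Set.toFinite _)
      omega
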